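/- Suppose Assumption (A) holds. Then for every δ > 0 and α ∈ [0,1), the origin 0 ∈ ℝ² is globally asymptotically stable for the closed-loop system: (i) for every ε > 0 there exists η > 0 such that every continuously differentiable x = (x1,x2) : [0,∞) → ℝ² satisfying x1'(t) = b(g(x2(t))−1) + D*·g(x2(t))(1−e^{x1(t)}) and x2'(t) = p(x2(t))(D(x(t)) − D*·g(x2(t))·e^{x1(t)}) for all t ≥ 0 with ‖x(0)‖ < η satisfies ‖x(t)‖ < ε for all t ≥ 0; and (ii) every such solution satisfies x(t) → 0 as t → ∞. -/

import Mathlib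

open Set Filter Real Topology

private lemma hasDerivAt_fst' {x : ℝ → ℝ × ℝ} {v : ℝ × ℝ} {t : ℝ} (h : HasDerivAt x v t) :
    HasDerivAt (fun s => (x s).1) v.1 t := by
  simpa using (h.hasFDerivAt.fst).hasDerivAt

private lemma hasDerivAt_snd' {x : ℝ → ℝ × ℝ} {v : ℝ × ℝ} {t : ℝ} (h : HasDerivAt x v t) :
    HasDerivAt (fun s => (x s).2) v.2 t := by
  simpa using (h.hasFDerivAt.snd).hasDerivAt

private lemma antitoneOn_Icc_of_deriv {y f : ℝ → ℝ} {a b : ℝ}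
    (hy : ∀ t ∈ Icc a b, HasDerivAt y (f t) t)
    (hf : ∀ t ∈ Ioo a b, f t ≤ 0) : AntitoneOn y (Icc a b) := by
  apply antitoneOn_of_deriv_nonpos (convex_Icc a b)
  · exact fun t ht => (hy t ht).continuousAt.continuousWithinAt
  · rw [interior_Icc]
    exact fun t ht => ((hy t (Ioo_subset_Icc_self ht)).differentiableAt).differentiableWithinAt
  · rw [interior_Icc]
    intro t ht
    rw [(hy t (Ioo_subset_Icc_self ht)).deriv]
    exact hf t ht

private lemma antitoneOn_Ici_of_deriv {y f : ℝ → ℝ} {t0 : ℝ}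
    (hy : ∀ t, t0 ≤ t → HasDerivAt y (f t) t)
    (hf : ∀ t, t0 ≤ t → f t ≤ 0) : AntitoneOn y (Ici t0) := by
  apply antitoneOn_of_deriv_nonpos (convex_Ici t0)
  · exact fun t ht => (hy t ht).continuousAt.continuousWithinAt
  · rw [interior_Ici]
    exact fun t ht => ((hy t ht.le).differentiableAt).differentiableWithinAt
  · rw [interior_Ici]
    intro t ht
    rw [(hy t ht.le).deriv]
    exact hf t ht.le

private lemma barrier_le {y f : ℝ → ℝ} {t0 c : ℝ}
    (hy : ∀ t, t0 ≤ t → HasDerivAt y (f t) t)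
    (hsign : ∀ t, t0 ≤ t → c < y t → f t ≤ 0)
    (h0 : y t0 ≤ c) : ∀ t, t0 ≤ t → y t ≤ c := by
  intro t ht
  by_contra hyt
  push_neg at hyt
  have ht0t : t0 < t := by
    rcases eq_or_lt_of_le ht with rfl | h
    · exact absurd hyt (not_lt.2 h0)
    · exact h
  set A : Set ℝ := Icc t0 t ∩ y ⁻¹' Iic c with hA
  have hAne : A.Nonempty := ⟨t0, ⟨le_refl _, ht⟩, h0⟩
  have hAbdd : BddAbove A := ⟨t, fun u hu => hu.1.2⟩
  have hycont : ContinuousOn y (Icc t0 t) := fun u hu =>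
    (hy u hu.1).continuousAt.continuousWithinAt
  have hAclosed : IsClosed A :=
    hycont.preimage_isClosed_of_isClosed isClosed_Icc isClosed_Iic
  have hsmem : sSup A ∈ A := hAclosed.csSup_mem hAne hAbdd
  set s := sSup A with hs
  have hsy : y s ≤ c := hsmem.2
  have hst0 : t0 ≤ s := hsmem.1.1
  have hst : s < t := by
    rcases eq_or_lt_of_le hsmem.1.2 with h | h
    · exact absurd (h ▸ hsy) (not_le.2 hyt)
    · exact h
  have hgt : ∀ u, s < u → u ≤ t → c < y u := by
    intro u hsu hut
    by_contra hcu
    push_neg at hcu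
    exact absurd (le_csSup hAbdd ⟨⟨hst0.trans hsu.le, hut⟩, hcu⟩) (not_le.2 hsu)
  have key : ∀ s' ∈ Ioo s t, y t ≤ y s' := by
    intro s' hs'
    have hanti : AntitoneOn y (Icc s' t) := by
      apply antitoneOn_Icc_of_deriv
      · exact fun u hu => hy u ((hst0.trans hs'.1.le).trans hu.1)
      · intro u hu
        exact hsign u ((hst0.trans hs'.1.le).trans hu.1.le)
          (hgt u (hs'.1.trans hu.1) hu.2.le)
    exact hanti ⟨le_refl _, hs'.2.le⟩ ⟨hs'.2.le.trans (le_refl t), le_refl t⟩ hs'.2.le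
  have hcont : ContinuousAt y s := (hy s hst0).continuousAt
  have : y t ≤ y s := by
    have htend : Tendsto y (𝓝[>] s) (𝓝 (y s)) :=
      hcont.continuousWithinAt.tendsto
    refine ge_of_tendsto htend ?_
    filter_upwards [Ioo_mem_nhdsGT_of_mem ⟨le_refl s, hst⟩] with u hu using key u hu
  exact absurd (this.trans hsy) (not_le.2 hyt)

private lemma barrier_ge {y f : ℝ → ℝ} {t0 c : ℝ}
    (hy : ∀ t, t0 ≤ t → HasDerivAt y (f t) t)
    (hsign : ∀ t, t0 ≤ t → y t < c → 0 ≤ f t)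
    (h0 : c ≤ y t0) : ∀ t, t0 ≤ t → c ≤ y t := by
  have := barrier_le (y := fun u => -y u) (f := fun u => -f u) (t0 := t0) (c := -c)
    (fun t ht => (hy t ht).neg)
    (fun t ht h => by
      have h' : -c < -y t := h
      have := hsign t ht (by linarith)
      show -f t ≤ 0
      linarith)
    (by show -y t0 ≤ -c; linarith)
  intro t ht
  have h2 : -y t ≤ -c := this t ht
  linarith

private lemma decay_linear {y f : ℝ → ℝ} {t0 k : ℝ}
    (hy : ∀ t, t0 ≤ t → HasDerivAt y (f t) t)
    (hf : ∀ t, t0 ≤ t → f t ≤ -k) :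
    ∀ t, t0 ≤ t → y t ≤ y t0 - k * (t - t0) := by
  intro t ht
  have hz : ∀ u, t0 ≤ u → HasDerivAt (fun v => y v + k * v) (f u + k) u := by
    intro u hu
    exact (hy u hu).add (by simpa using (hasDerivAt_id u).const_mul k)
  have hanti := antitoneOn_Ici_of_deriv hz (fun u hu => by
    have := hf u hu; linarith)
  have h2 : y t + k * t ≤ y t0 + k * t0 :=
    hanti (mem_Ici.2 (le_refl t0)) (mem_Ici.2 ht) ht
  linarith

private lemma growth_linear {y f : ℝ → ℝ} {t0 k : ℝ}
    (hy : ∀ t, t0 ≤ t → HasDerivAt y (f t) t)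
    (hf : ∀ t, t0 ≤ t → k ≤ f t) :
    ∀ t, t0 ≤ t → y t0 + k * (t - t0) ≤ y t := by
  intro t ht
  have := decay_linear (y := fun u => -y u) (f := fun u => -f u) (t0 := t0) (k := k)
    (fun u hu => (hy u hu).neg) (fun u hu => by
      have := hf u hu; show -f u ≤ -k; linarith) t ht
  have h2 : -y t ≤ -y t0 - k * (t - t0) := this
  linarith

private lemma tendsto_of_antitone_low {y : ℝ → ℝ} {t0 L : ℝ}
    (hmono : AntitoneOn y (Ici t0))
    (hlow : ∀ t, t0 ≤ t → L ≤ y t)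
    (hnear : ∀ ε, 0 < ε → ∃ T, t0 ≤ T ∧ y T < L + ε) :
    Tendsto y atTop (𝓝 L) := by
  rw [Metric.tendsto_atTop]
  intro ε hε
  obtain ⟨T, hT, hyT⟩ := hnear ε hε
  refine ⟨T, fun t ht => ?_⟩
  have h1 := hlow t (hT.trans ht)
  have h2 := hmono (mem_Ici.2 hT) (mem_Ici.2 (hT.trans ht)) ht
  rw [Real.dist_eq, abs_lt]
  constructor <;> linarith

private lemma tendsto_of_monotone_up {y : ℝ → ℝ} {t0 L : ℝ}
    (hmono : AntitoneOn (fun t => -y t) (Ici t0))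
    (hhigh : ∀ t, t0 ≤ t → y t ≤ L)
    (hnear : ∀ ε, 0 < ε → ∃ T, t0 ≤ T ∧ L - ε < y T) :
    Tendsto y atTop (𝓝 L) := by
  have := tendsto_of_antitone_low (y := fun t => -y t) (t0 := t0) (L := -L)
    hmono (fun t ht => by
      have := hhigh t ht; show -L ≤ -y t; linarith)
    (fun ε hε => by
      obtain ⟨T, hT, h⟩ := hnear ε hε
      exact ⟨T, hT, by show -y T < -L + ε; linarith⟩)
  have h2 : Tendsto (fun t => -(-y t)) atTop (𝓝 (-(-L))) := this.neg
  simpa using h2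

private lemma expsum (r : ℝ) : 1 - Real.exp (-r) ≤ Real.exp r - 1 := by
  have hm : Real.exp r * Real.exp (-r) = 1 := by rw [← Real.exp_add]; simp
  nlinarith [sq_nonneg (Real.exp r - 1), Real.exp_pos r]

private lemma f1_upper {b Dstar γ θ β gm E : ℝ} (hb : 0 ≤ b) (hD : 0 < Dstar)
    (hγa : γ - 1 ≤ θ) (hγm : gm ≤ γ) (hgm : 0 < gm)
    (hβ : 0 < β) (hβE : β ≤ E - 1)
    (hkey : b * θ + θ ≤ Dstar * gm * β) :
    b * (γ - 1) + Dstar * γ * (1 - E) ≤ -θ := by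
  have h1 : Dstar * gm * β ≤ Dstar * γ * (E - 1) :=
    mul_le_mul (mul_le_mul_of_nonneg_left hγm hD.le) hβE hβ.le
      (mul_nonneg hD.le (hgm.le.trans hγm))
  nlinarith [mul_le_mul_of_nonneg_left hγa hb]

private lemma f1_lower {b Dstar γ θ β gm E : ℝ} (hb : 0 ≤ b) (hD : 0 < Dstar)
    (hγb : 1 - γ ≤ θ) (hγm : gm ≤ γ) (hgm : 0 < gm)
    (hβ : 0 < β) (hβE : β ≤ 1 - E)
    (hkey : b * θ + θ ≤ Dstar * gm * β) :
    θ ≤ b * (γ - 1) + Dstar * γ * (1 - E) := by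
  have h1 : Dstar * gm * β ≤ Dstar * γ * (1 - E) :=
    mul_le_mul (mul_le_mul_of_nonneg_left hγm hD.le) hβE hβ.le
      (mul_nonneg hD.le (hgm.le.trans hγm))
  nlinarith [mul_le_mul_of_nonneg_left hγb hb]

private lemma f2_upper {Dstar γ E W gm Em β : ℝ} (hD : 0 < Dstar) (hgm : 0 < gm)
    (hγ : gm ≤ γ) (hEm : 0 < Em) (hE : Em ≤ E) (hβ : 0 < β) (hW : W ≤ -β) :
    Dstar * γ * E * W ≤ -(Dstar * gm * Em * β) := by
  have hγ0 : 0 < γ := hgm.trans_le hγ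
  have hE0 : 0 < E := hEm.trans_le hE
  have h1 : Dstar * gm * Em * β ≤ Dstar * γ * E * β :=
    mul_le_mul_of_nonneg_right
      (mul_le_mul (mul_le_mul_of_nonneg_left hγ hD.le) hE hEm.le
        (mul_nonneg hD.le hγ0.le)) hβ.le
  have h2 : Dstar * γ * E * W ≤ Dstar * γ * E * (-β) :=
    mul_le_mul_of_nonneg_left hW (by positivity)
  nlinarith

private lemma f2_lower {Dstar γ E W gm Em β : ℝ} (hD : 0 < Dstar) (hgm : 0 < gm)
    (hγ : gm ≤ γ) (hEm : 0 < Em) (hE : Em ≤ E) (hβ : 0 < β) (hW : β ≤ W) :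
    Dstar * gm * Em * β ≤ Dstar * γ * E * W := by
  have hγ0 : 0 < γ := hgm.trans_le hγ
  have hE0 : 0 < E := hEm.trans_le hE
  exact mul_le_mul
    (mul_le_mul (mul_le_mul_of_nonneg_left hγ hD.le) hE hEm.le (mul_nonneg hD.le hγ0.le))
    hW hβ.le (by positivity)


set_option maxHeartbeats 2000000 in
/-- Under Assumption (A), for every δ > 0 and α ∈ [0,1), the origin is
globally asymptotically stable for the closed-loop system. -/
theorem stmt_1
    (S_in Sstar p0 b Dstar : ℝ) (μ : ℝ → ℝ)
    (hSin : 0 < S_in) (hSstar : Sstar ∈ Set.Ioo 0 S_in)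
    (hp0 : 0 < p0) (hb : 0 ≤ b) (hDstar : 0 < Dstar)
    (hμ_bdd : BddAbove (Set.range μ))
    (hμ_C1 : ContDiffOn ℝ 1 μ (Set.Ici 0))
    (hμ_nonneg : ∀ S, 0 ≤ S → 0 ≤ μ S)
    (hμ_zero : μ 0 = 0) (hμ_pos : ∀ S, 0 < S → 0 < μ S)
    (heq : p0 * μ Sstar = b + Dstar)
    (κ : ℝ) (hκ : κ = (S_in - Sstar) / Sstar)
    (p g : ℝ → ℝ)
    (hp : ∀ z, p z = κ * Real.exp (-z) + 1)
    (hg : ∀ z, g z = μ (S_in / p z) / μ Sstar)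
    -- Assumption (A)
    (hA : ∀ S ∈ Set.Icc Sstar S_in, b < p0 * μ S)
    (δ α : ℝ) (hδ : 0 < δ) (hα : α ∈ Set.Ico (0 : ℝ) 1)
    -- feedback law
    (D : ℝ × ℝ → ℝ)
    (hD : ∀ x : ℝ × ℝ, D x =
      (κ + 1) * Dstar * g x.2 * Real.exp (x.1 - x.2) / p x.2 +
        (if x.2 ≤ 0 then δ * b * |g x.2 - 1| ^ (1 + α) else 0))
    -- closed-loop vector field
    (F : ℝ × ℝ → ℝ × ℝ)
    (hF : ∀ x : ℝ × ℝ, F x =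
      (b * (g x.2 - 1) + Dstar * g x.2 * (1 - Real.exp x.1),
       p x.2 * (D x - Dstar * g x.2 * Real.exp x.1))) :
    -- (i) Lyapunov stability
    (∀ ε > 0, ∃ η > 0, ∀ x : ℝ → ℝ × ℝ,
      (∀ t, 0 ≤ t → HasDerivAt x (F (x t)) t) → ‖x 0‖ < η →
      ∀ t, 0 ≤ t → ‖x t‖ < ε) ∧
    -- (ii) global attractivity
    (∀ x : ℝ → ℝ × ℝ,
      (∀ t, 0 ≤ t → HasDerivAt x (F (x t)) t) →
      Filter.Tendsto x Filter.atTop (nhds (0 : ℝ × ℝ))) := by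
  obtain ⟨hSs0, hSsin⟩ := hSstar
  obtain ⟨hα0, hα1⟩ := hα
  have hμS : 0 < μ Sstar := hμ_pos _ hSs0
  have hκpos : 0 < κ := by rw [hκ]; exact div_pos (by linarith) hSs0
  have hκ1 : (κ + 1) * Sstar = S_in := by rw [hκ]; field_simp; ring
  have hpgt1 : ∀ z, 1 < p z := by
    intro z; rw [hp]; nlinarith [Real.exp_pos (-z)]
  have hppos : ∀ z, 0 < p z := fun z => lt_trans one_pos (hpgt1 z)
  have hSz_pos : ∀ z, 0 < S_in / p z := fun z => div_pos hSin (hppos z)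
  have hS0 : S_in / p 0 = Sstar := by
    rw [hp]
    simp only [neg_zero, Real.exp_zero, mul_one]
    rw [div_eq_iff (by positivity)]
    linarith
  have hg0 : g 0 = 1 := by rw [hg, hS0]; field_simp
  have hgpos : ∀ z, 0 < g z := by
    intro z; rw [hg]; exact div_pos (hμ_pos _ (hSz_pos z)) hμS
  have hpcont : Continuous p := by
    have hfe : p = fun z => κ * Real.exp (-z) + 1 := funext hp
    rw [hfe]
    fun_prop
  have hμScont : Continuous fun z => μ (S_in / p z) := by
    rw [continuous_iff_continuousAt]
    intro z
    have h1 : ContinuousAt μ (S_in / p z) :=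
      hμ_C1.continuousOn.continuousAt (Ici_mem_nhds (hSz_pos z))
    have h2 : ContinuousAt (fun w : ℝ => S_in / p w) z :=
      ContinuousAt.div continuousAt_const hpcont.continuousAt (hppos z).ne'
    exact ContinuousAt.comp h1 h2
  have hgcont : Continuous g := by
    have hfe : g = fun z => μ (S_in / p z) / μ Sstar := funext hg
    rw [hfe]
    exact hμScont.div_const _
  have hS_ge : ∀ z, 0 ≤ z → Sstar ≤ S_in / p z := by
    intro z hz
    have h1 : Real.exp (-z) ≤ 1 := Real.exp_le_one_iff.2 (by linarith)
    have h2 : p z ≤ κ + 1 := by rw [hp]; nlinarith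
    rw [le_div_iff₀ (hppos z)]
    nlinarith [hppos z]
  have hS_lt : ∀ z, S_in / p z < S_in := by
    intro z
    rw [div_lt_iff₀ (hppos z)]
    nlinarith [hpgt1 z]
  have hApos : ∀ z, 0 ≤ z → b < p0 * μ (S_in / p z) :=
    fun z hz => hA _ ⟨hS_ge z hz, (hS_lt z).le⟩
  have hgform : ∀ z, (b + Dstar) * g z = p0 * μ (S_in / p z) := by
    intro z
    rw [hg, ← heq]
    field_simp
  have hf1eq : ∀ z E, b * (g z - 1) + Dstar * g z * (1 - E)
      = p0 * μ (S_in / p z) - b - Dstar * g z * E := by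
    intro z E
    linear_combination hgform z
  have hf2eq : ∀ X1 X2 : ℝ,
      p X2 * ((κ + 1) * Dstar * g X2 * Real.exp (X1 - X2) / p X2
        + (if X2 ≤ 0 then δ * b * |g X2 - 1| ^ (1 + α) else 0)
        - Dstar * g X2 * Real.exp X1)
      = Dstar * g X2 * Real.exp X1 * (Real.exp (-X2) - 1)
        + p X2 * (if X2 ≤ 0 then δ * b * |g X2 - 1| ^ (1 + α) else 0) := by
    intro X1 X2
    have h0 : (0:ℝ) < κ * Real.exp (-X2) + 1 := by nlinarith [Real.exp_pos (-X2)]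
    have hexp : Real.exp (X1 - X2) = Real.exp X1 * Real.exp (-X2) := by
      rw [← Real.exp_add]; ring_nf
    rw [hexp, hp X2]
    field_simp
    ring
  -- the two components of the vector field along a solution
  have hsol : ∀ x : ℝ → ℝ × ℝ, (∀ t, 0 ≤ t → HasDerivAt x (F (x t)) t) →
      (∀ t, 0 ≤ t → HasDerivAt (fun s => (x s).1)
        ((fun u => b * (g ((x u).2) - 1) + Dstar * g ((x u).2) * (1 - Real.exp ((x u).1))) t) t)
      ∧ (∀ t, 0 ≤ t → HasDerivAt (fun s => (x s).2)
        ((fun u => Dstar * g ((x u).2) * Real.exp ((x u).1) * (Real.exp (-((x u).2)) - 1)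
          + p ((x u).2) * (if ((x u).2) ≤ 0 then δ * b * |g ((x u).2) - 1| ^ (1 + α) else 0)) t) t) := by
    intro x hx
    constructor
    · intro t ht
      have h := hasDerivAt_fst' (hx t ht)
      rw [hF (x t)] at h
      exact h
    · intro t ht
      have h := hasDerivAt_snd' (hx t ht)
      rw [hF (x t)] at h
      have h2 : HasDerivAt (fun s => (x s).2)
          (p ((x t).2) * (D (x t) - Dstar * g ((x t).2) * Real.exp ((x t).1))) t := h
      rw [hD (x t)] at h2
      have h3 := hf2eq ((x t).1) ((x t).2)
      rw [h3] at h2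
      exact h2
  -- sign facts
  have hf2val_pos : ∀ X1 X2 : ℝ, 0 < X2 →
      Dstar * g X2 * Real.exp X1 * (Real.exp (-X2) - 1)
        + p X2 * (if X2 ≤ 0 then δ * b * |g X2 - 1| ^ (1 + α) else 0) < 0 := by
    intro X1 X2 h
    rw [if_neg (not_le.2 h), mul_zero, add_zero]
    have h1 : Real.exp (-X2) - 1 < 0 := by
      have := Real.exp_lt_one_iff.2 (show -X2 < 0 by linarith)
      linarith
    have h2 : 0 < Dstar * g X2 * Real.exp X1 :=
      mul_pos (mul_pos hDstar (hgpos X2)) (Real.exp_pos _)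
    nlinarith
  have hf2val_nonneg : ∀ X1 X2 : ℝ, X2 ≤ 0 →
      0 ≤ Dstar * g X2 * Real.exp X1 * (Real.exp (-X2) - 1)
        + p X2 * (if X2 ≤ 0 then δ * b * |g X2 - 1| ^ (1 + α) else 0) := by
    intro X1 X2 h
    rw [if_pos h]
    have h1 : 0 ≤ Real.exp (-X2) - 1 := by
      have := Real.one_le_exp_iff.2 (show 0 ≤ -X2 by linarith)
      linarith
    have h2 : 0 ≤ δ * b * |g X2 - 1| ^ (1 + α) :=
      mul_nonneg (mul_nonneg hδ.le hb) (Real.rpow_nonneg (abs_nonneg _) _)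
    have h3 : 0 ≤ Dstar * g X2 * Real.exp X1 :=
      (mul_pos (mul_pos hDstar (hgpos X2)) (Real.exp_pos _)).le
    have h4 := mul_nonneg h3 h1
    have h5 := mul_nonneg (hppos X2).le h2
    linarith
  have hf2val_nonpos : ∀ X1 X2 : ℝ, 0 ≤ X2 →
      Dstar * g X2 * Real.exp X1 * (Real.exp (-X2) - 1)
        + p X2 * (if X2 ≤ 0 then δ * b * |g X2 - 1| ^ (1 + α) else 0) ≤ 0 := by
    intro X1 X2 h
    rcases h.eq_or_lt with h' | h'
    · subst h'
      simp [hg0, Real.zero_rpow (show (1:ℝ)+α ≠ 0 by positivity)]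
    · exact (hf2val_pos X1 X2 h').le
  constructor
  · -- (i) stability
    intro ε hε
    set ε2 := ε/2 with hε2def
    have hε2 : 0 < ε2 := by rw [hε2def]; linarith
    set β := 1 - Real.exp (-ε2) with hβdef
    have hβ : 0 < β := by
      have := Real.exp_lt_one_iff.2 (show -ε2 < 0 by linarith)
      rw [hβdef]; linarith
    set θ := min (1/2 : ℝ) (Dstar * (1/2) * β / (b+1)) with hθdef
    have hθ : 0 < θ := lt_min (by norm_num) (by positivity)
    have hθhalf : θ ≤ 1/2 := min_le_left _ _
    have hkey : b * θ + θ ≤ Dstar * (1/2) * β := by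
      have h1 : θ ≤ Dstar * (1/2) * β / (b+1) := min_le_right _ _
      have h2 : (b+1) * θ ≤ (b+1) * (Dstar * (1/2) * β / (b+1)) :=
        mul_le_mul_of_nonneg_left h1 (by linarith)
      have h3 : (b+1) * (Dstar * (1/2) * β / (b+1)) = Dstar * (1/2) * β := by
        field_simp
      nlinarith
    obtain ⟨η1, hη1, hball⟩ := Metric.continuousAt_iff.1 (hgcont.continuousAt (x := (0:ℝ))) θ hθ
    set η := min ε2 (η1/2) with hηdef
    have hη : 0 < η := lt_min hε2 (by linarith)
    have hηε2 : η ≤ ε2 := min_le_left _ _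
    refine ⟨η, hη, ?_⟩
    intro x hx hx0 t ht
    obtain ⟨hx1d, hx2d⟩ := hsol x hx
    have hx10 : |(x 0).1| < η := by
      have h1 : ‖(x 0).1‖ ≤ ‖x 0‖ := norm_fst_le (x 0)
      rw [Real.norm_eq_abs] at h1
      linarith
    have hx20 : |(x 0).2| < η := by
      have h1 : ‖(x 0).2‖ ≤ ‖x 0‖ := norm_snd_le (x 0)
      rw [Real.norm_eq_abs] at h1
      linarith
    have hX2up : ∀ t, 0 ≤ t → (x t).2 ≤ η := by
      apply barrier_le hx2d ?_ (le_of_lt (abs_lt.1 hx20).2)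
      intro u hu h
      exact (hf2val_pos _ _ (hη.trans h)).le
    have hX2dn : ∀ t, 0 ≤ t → -η ≤ (x t).2 := by
      apply barrier_ge hx2d ?_ (le_of_lt (abs_lt.1 hx20).1)
      intro u hu h
      exact hf2val_nonneg _ _ (by linarith)
    have hγ : ∀ u, 0 ≤ u → |g ((x u).2) - 1| < θ := by
      intro u hu
      have h1 : |(x u).2| < η1 := by
        have h2 := abs_le.2 ⟨hX2dn u hu, hX2up u hu⟩
        have h3 : η ≤ η1/2 := min_le_right _ _
        linarith
      have h4 := hball (show dist ((x u).2) 0 < η1 by rwa [Real.dist_eq, sub_zero])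
      rwa [Real.dist_eq, hg0] at h4
    have hγm : ∀ u, 0 ≤ u → (1/2 : ℝ) ≤ g ((x u).2) := by
      intro u hu
      have h1 := (abs_lt.1 (hγ u hu)).1
      linarith
    have hX1up : ∀ t, 0 ≤ t → (x t).1 ≤ ε2 := by
      apply barrier_le hx1d ?_ (by linarith [(abs_lt.1 hx10).2])
      intro u hu h
      have hβE : β ≤ Real.exp ((x u).1) - 1 := by
        have h1 : Real.exp ε2 ≤ Real.exp ((x u).1) := Real.exp_le_exp.2 h.le
        have h2 := expsum ε2
        rw [hβdef]; linarith
      have := f1_upper hb hDstar (le_of_lt (abs_lt.1 (hγ u hu)).2) (hγm u hu)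
        (by norm_num) hβ hβE hkey
      show b * (g ((x u).2) - 1) + Dstar * g ((x u).2) * (1 - Real.exp ((x u).1)) ≤ 0
      linarith
    have hX1dn : ∀ t, 0 ≤ t → -ε2 ≤ (x t).1 := by
      apply barrier_ge hx1d ?_ (by linarith [(abs_lt.1 hx10).1])
      intro u hu h
      have hβE : β ≤ 1 - Real.exp ((x u).1) := by
        have h1 : Real.exp ((x u).1) ≤ Real.exp (-ε2) := Real.exp_le_exp.2 h.le
        rw [hβdef]; linarith
      have h2 : 1 - g ((x u).2) ≤ θ := by
        have := (abs_lt.1 (hγ u hu)).1; linarith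
      have := f1_lower hb hDstar h2 (hγm u hu) (by norm_num) hβ hβE hkey
      show 0 ≤ b * (g ((x u).2) - 1) + Dstar * g ((x u).2) * (1 - Real.exp ((x u).1))
      linarith
    have h1 : |(x t).1| ≤ ε2 := abs_le.2 ⟨hX1dn t ht, hX1up t ht⟩
    have h2 : |(x t).2| ≤ η := abs_le.2 ⟨hX2dn t ht, hX2up t ht⟩
    rw [Prod.norm_def]
    apply max_lt
    · rw [Real.norm_eq_abs]; rw [hε2def] at h1; linarith
    · rw [Real.norm_eq_abs]; rw [hε2def] at hηε2; linarith
  · -- (ii) attractivity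
    intro x hx
    obtain ⟨hx1d, hx2d⟩ := hsol x hx
    -- Step 1: x2 band and convergence to 0
    have hband : Tendsto (fun t => (x t).2) atTop (𝓝 0) ∧
        ∀ t, 0 ≤ t → min ((x 0).2) 0 ≤ (x t).2 ∧ (x t).2 ≤ max ((x 0).2) 0 := by
      rcases le_or_gt 0 ((x 0).2) with hc | hc
      · -- nonnegative initial x2
        have hlow : ∀ t, 0 ≤ t → 0 ≤ (x t).2 := by
          apply barrier_ge hx2d ?_ hc
          intro u hu h
          exact hf2val_nonneg _ _ h.le
        have hf2np : ∀ u, 0 ≤ u →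
            (fun u => Dstar * g ((x u).2) * Real.exp ((x u).1) * (Real.exp (-((x u).2)) - 1)
              + p ((x u).2) * (if ((x u).2) ≤ 0 then δ * b * |g ((x u).2) - 1| ^ (1 + α) else 0)) u ≤ 0 :=
          fun u hu => hf2val_nonpos _ _ (hlow u hu)
        have hanti : AntitoneOn (fun s => (x s).2) (Ici 0) :=
          antitoneOn_Ici_of_deriv hx2d hf2np
        have hub : ∀ t, 0 ≤ t → (x t).2 ≤ (x 0).2 :=
          fun t ht => hanti self_mem_Ici (mem_Ici.2 ht) ht
        have hnear : ∀ ε, 0 < ε → ∃ T, 0 ≤ T ∧ (x T).2 < ε := by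
          intro ε hε
          by_contra hno
          push_neg at hno
          -- compact bounds on [0, M]
          obtain ⟨z1, hz1mem, hz1min⟩ := isCompact_Icc.exists_isMinOn
            (nonempty_Icc.2 hc) hgcont.continuousOn
          have hgm : 0 < g z1 := hgpos z1
          obtain ⟨z2, hz2mem, hz2min⟩ := isCompact_Icc.exists_isMinOn
            (nonempty_Icc.2 hc)
            ((continuous_const.mul hμScont).sub continuous_const).continuousOn
          have hamin : 0 < p0 * μ (S_in / p z2) - b := by
            have := hApos z2 hz2mem.1; linarith
          obtain ⟨z3, hz3mem, hz3max⟩ := isCompact_Icc.exists_isMaxOn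
            (nonempty_Icc.2 hc) (continuous_const.mul hgcont).continuousOn
          have hBmax : 0 < Dstar * g z3 := mul_pos hDstar (hgpos z3)
          set amin := p0 * μ (S_in / p z2) - b with hamindef
          set Bmax := Dstar * g z3 with hBmaxdef
          set m := min ((x 0).1) (Real.log (amin / (2 * Bmax))) with hmdef
          have hX1low : ∀ t, 0 ≤ t → m ≤ (x t).1 := by
            apply barrier_ge hx1d ?_ (min_le_left _ _)
            intro u hu hlt
            have hX2mem : (x u).2 ∈ Icc 0 ((x 0).2) := ⟨hlow u hu, hub u hu⟩
            have h1 : amin ≤ p0 * μ (S_in / p ((x u).2)) - b := isMinOn_iff.1 hz2min _ hX2mem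
            have h2 : Dstar * g ((x u).2) ≤ Bmax := isMaxOn_iff.1 hz3max _ hX2mem
            have h3 : Real.exp ((x u).1) ≤ amin / (2 * Bmax) := by
              have h4 : (x u).1 ≤ Real.log (amin / (2 * Bmax)) :=
                le_of_lt (lt_of_lt_of_le hlt (min_le_right _ _))
              calc Real.exp ((x u).1) ≤ Real.exp (Real.log (amin / (2 * Bmax))) :=
                    Real.exp_le_exp.2 h4
                _ = amin / (2 * Bmax) := Real.exp_log (by positivity)
            have h5 : Dstar * g ((x u).2) * Real.exp ((x u).1) ≤ Bmax * (amin / (2 * Bmax)) :=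
              mul_le_mul h2 h3 (Real.exp_pos _).le hBmax.le
            have h6 : Bmax * (amin / (2 * Bmax)) = amin / 2 := by
              field_simp
            show 0 ≤ b * (g ((x u).2) - 1) + Dstar * g ((x u).2) * (1 - Real.exp ((x u).1))
            rw [hf1eq]
            linarith
          set k := Dstar * g z1 * Real.exp m * (1 - Real.exp (-ε)) with hkdef
          have hexpε : Real.exp (-ε) < 1 := Real.exp_lt_one_iff.2 (by linarith)
          have hk0 : 0 < k := by
            apply mul_pos (mul_pos (mul_pos hDstar hgm) (Real.exp_pos m))
            linarith
          have hdec : ∀ u, 0 ≤ u →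
              (fun u => Dstar * g ((x u).2) * Real.exp ((x u).1) * (Real.exp (-((x u).2)) - 1)
                + p ((x u).2) * (if ((x u).2) ≤ 0 then δ * b * |g ((x u).2) - 1| ^ (1 + α) else 0)) u ≤ -k := by
            intro u hu
            have hX2u : ε ≤ (x u).2 := hno u hu
            show Dstar * g ((x u).2) * Real.exp ((x u).1) * (Real.exp (-((x u).2)) - 1)
                + p ((x u).2) * (if ((x u).2) ≤ 0 then δ * b * |g ((x u).2) - 1| ^ (1 + α) else 0) ≤ -k
            rw [if_neg (not_le.2 (lt_of_lt_of_le hε hX2u)), mul_zero, add_zero]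
            have hW : Real.exp (-((x u).2)) - 1 ≤ -(1 - Real.exp (-ε)) := by
              have := Real.exp_le_exp.2 (show -((x u).2) ≤ -ε by linarith)
              linarith
            have := f2_upper hDstar hgm (isMinOn_iff.1 hz1min _ ⟨hlow u hu, hub u hu⟩)
              (Real.exp_pos m) (Real.exp_le_exp.2 (hX1low u hu)) (by linarith) hW
            rw [hkdef]
            linarith
          have hdl := decay_linear hx2d hdec
          set tb := max 0 (((x 0).2 - ε)/k + 1) with htbdef
          have htb0 : (0:ℝ) ≤ tb := le_max_left _ _
          have h1 := hdl tb htb0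
          have h2 := hno tb htb0
          have h3 : ((x 0).2 - ε)/k + 1 ≤ tb := le_max_right _ _
          have h4 : (x 0).2 - ε + k ≤ k * tb := by
            have h5 := mul_le_mul_of_nonneg_left h3 hk0.le
            have h6 : k * (((x 0).2 - ε)/k + 1) = (x 0).2 - ε + k := by
              field_simp
            linarith
          linarith
        have htend : Tendsto (fun s => (x s).2) atTop (𝓝 0) := by
          apply tendsto_of_antitone_low hanti hlow
          intro ε hε
          obtain ⟨T, hT1, hT2⟩ := hnear ε hε
          exact ⟨T, hT1, by linarith⟩
        exact ⟨htend, fun t ht =>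
          ⟨(min_le_right _ _).trans (hlow t ht), (hub t ht).trans (le_max_left _ _)⟩⟩
      · -- negative initial x2
        have hup0 : ∀ t, 0 ≤ t → (x t).2 ≤ 0 := by
          apply barrier_le hx2d ?_ hc.le
          intro u hu h
          exact (hf2val_pos _ _ h).le
        have hf2nn : ∀ u, 0 ≤ u → 0 ≤
            Dstar * g ((x u).2) * Real.exp ((x u).1) * (Real.exp (-((x u).2)) - 1)
              + p ((x u).2) * (if ((x u).2) ≤ 0 then δ * b * |g ((x u).2) - 1| ^ (1 + α) else 0) :=
          fun u hu => hf2val_nonneg _ _ (hup0 u hu)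
        have hmono : AntitoneOn (fun s => -(x s).2) (Ici 0) := by
          apply antitoneOn_Ici_of_deriv (f := fun u =>
            -(Dstar * g ((x u).2) * Real.exp ((x u).1) * (Real.exp (-((x u).2)) - 1)
              + p ((x u).2) * (if ((x u).2) ≤ 0 then δ * b * |g ((x u).2) - 1| ^ (1 + α) else 0)))
            (fun u hu => (hx2d u hu).neg)
            (fun u hu => neg_nonpos.2 (hf2nn u hu))
        have hlow0 : ∀ t, 0 ≤ t → (x 0).2 ≤ (x t).2 := by
          intro t ht
          have h1 : -(x t).2 ≤ -(x 0).2 := hmono self_mem_Ici (mem_Ici.2 ht) ht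
          linarith
        have hbdd : BddAbove ((fun s => (x s).2) '' Ici 0) := by
          refine ⟨0, ?_⟩
          rintro v ⟨u, hu, rfl⟩
          exact hup0 u hu
        set L := sSup ((fun s => (x s).2) '' Ici 0) with hLdef
        have hmemim : (x 0).2 ∈ (fun s => (x s).2) '' Ici 0 := ⟨0, self_mem_Ici, rfl⟩
        have hLle0 : L ≤ 0 := csSup_le ⟨_, hmemim⟩ (by rintro v ⟨u, hu, rfl⟩; exact hup0 u hu)
        have hleL : ∀ t, 0 ≤ t → (x t).2 ≤ L := fun t ht => le_csSup hbdd ⟨t, ht, rfl⟩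
        have hnear : ∀ ε, 0 < ε → ∃ T, 0 ≤ T ∧ L - ε < (x T).2 := by
          intro ε hε
          by_contra hno
          push_neg at hno
          have h1 : L ≤ L - ε := csSup_le ⟨_, hmemim⟩ (by rintro v ⟨u, hu, rfl⟩; exact hno u hu)
          linarith
        have htendL : Tendsto (fun s => (x s).2) atTop (𝓝 L) :=
          tendsto_of_monotone_up hmono hleL hnear
        have hL0 : L = 0 := by
          by_contra hL
          have hLneg : L < 0 := lt_of_le_of_ne hLle0 hL
          obtain ⟨z1, hz1mem, hz1min⟩ := isCompact_Icc.exists_isMinOn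
            (nonempty_Icc.2 hc.le) hgcont.continuousOn
          have hgm : 0 < g z1 := hgpos z1
          have hband2 : ∀ t, 0 ≤ t → (x t).2 ∈ Icc ((x 0).2) 0 :=
            fun t ht => ⟨hlow0 t ht, hup0 t ht⟩
          have hcontra : ∃ T k, 0 ≤ T ∧ 0 < k ∧ ∀ u, T ≤ u →
              k ≤ Dstar * g ((x u).2) * Real.exp ((x u).1) * (Real.exp (-((x u).2)) - 1)
                + p ((x u).2) * (if ((x u).2) ≤ 0 then δ * b * |g ((x u).2) - 1| ^ (1 + α) else 0) := by
            by_cases hbg : b = 0 ∨ g L = 1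
            · -- drift subcase: use the x1 equation
              set θ := Dstar * g z1 * (1 - Real.exp (-1)) / 2 with hθdef
              have hexp1 : Real.exp (-(1:ℝ)) < 1 := Real.exp_lt_one_iff.2 (by norm_num)
              have hθ : 0 < θ := by
                rw [hθdef]
                have h1 : (0:ℝ) < 1 - Real.exp (-1) := by linarith
                positivity
              have hTex : ∃ T, 0 ≤ T ∧ ∀ u, T ≤ u → b * |g ((x u).2) - 1| ≤ θ := by
                rcases hbg with hb0 | hgL
                · exact ⟨0, le_rfl, fun u hu => by rw [hb0, zero_mul]; exact hθ.le⟩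
                · have hγL : Tendsto (fun u => g ((x u).2)) atTop (𝓝 1) := by
                    have h1 := (hgcont.tendsto L).comp htendL
                    rwa [hgL] at h1
                  obtain ⟨N, hN⟩ := Metric.tendsto_atTop.1 hγL (θ/(b+1)) (by positivity)
                  refine ⟨max N 0, le_max_right _ _, fun u hu => ?_⟩
                  have h1 := hN u ((le_max_left _ _).trans hu)
                  rw [Real.dist_eq] at h1
                  have h2 : b ≤ b + 1 := by linarith
                  calc b * |g ((x u).2) - 1| ≤ (b+1) * (θ/(b+1)) :=
                        mul_le_mul h2 h1.le (abs_nonneg _) (by linarith)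
                    _ = θ := by field_simp
              obtain ⟨T, hT0, hTb⟩ := hTex
              set c := min ((x T).1) (-1 : ℝ) with hcdef
              have hX1low : ∀ u, T ≤ u → c ≤ (x u).1 := by
                apply barrier_ge (t0 := T) (fun u hu => hx1d u (hT0.trans hu)) ?_ (min_le_left _ _)
                intro u hu hlt
                show 0 ≤ b * (g ((x u).2) - 1) + Dstar * g ((x u).2) * (1 - Real.exp ((x u).1))
                have h1 := hTb u hu
                have h2 : g z1 ≤ g ((x u).2) := isMinOn_iff.1 hz1min _ (hband2 u (hT0.trans hu))
                have h3 : Real.exp ((x u).1) ≤ Real.exp (-(1:ℝ)) :=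
                  Real.exp_le_exp.2 (le_of_lt (lt_of_lt_of_le hlt (min_le_right _ _)))
                have h4 : -θ ≤ b * (g ((x u).2) - 1) := by
                  have h5 := neg_abs_le (g ((x u).2) - 1)
                  nlinarith [abs_nonneg (g ((x u).2) - 1)]
                have h6 : Dstar * g z1 * (1 - Real.exp (-(1:ℝ)))
                    ≤ Dstar * g ((x u).2) * (1 - Real.exp ((x u).1)) := by
                  apply mul_le_mul (mul_le_mul_of_nonneg_left h2 hDstar.le) (by linarith)
                    (by linarith) (mul_nonneg hDstar.le (hgm.le.trans h2))
                have h7 : Dstar * g z1 * (1 - Real.exp (-(1:ℝ))) = 2*θ := by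
                  rw [hθdef]; ring
                linarith
              set k := Dstar * g z1 * Real.exp c * (Real.exp (-L) - 1) with hkdef
              have hexpL : 1 < Real.exp (-L) := Real.one_lt_exp_iff.2 (by linarith)
              have hk : 0 < k := by
                apply mul_pos (mul_pos (mul_pos hDstar hgm) (Real.exp_pos c))
                linarith
              refine ⟨T, k, hT0, hk, ?_⟩
              intro u hu
              rw [if_pos (hup0 u (hT0.trans hu))]
              have h2 : g z1 ≤ g ((x u).2) := isMinOn_iff.1 hz1min _ (hband2 u (hT0.trans hu))
              have hW : Real.exp (-L) - 1 ≤ Real.exp (-((x u).2)) - 1 := by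
                have := Real.exp_le_exp.2 (neg_le_neg (hleL u (hT0.trans hu)))
                linarith
              have hfirst := f2_lower hDstar hgm h2 (Real.exp_pos c)
                (Real.exp_le_exp.2 (hX1low u hu)) (by linarith) hW
              have hsecond : 0 ≤ p ((x u).2) * (δ * b * |g ((x u).2) - 1| ^ (1 + α)) :=
                mul_nonneg (hppos _).le
                  (mul_nonneg (mul_nonneg hδ.le hb) (Real.rpow_nonneg (abs_nonneg _) _))
              rw [hkdef]
              linarith
            · -- persistent feedback subcase
              push_neg at hbg
              obtain ⟨hbne, hgLne⟩ := hbg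
              have hbpos : 0 < b := lt_of_le_of_ne hb (Ne.symm hbne)
              set q := δ * b * |g L - 1| ^ (1 + α) with hqdef
              have hq : 0 < q := by
                apply mul_pos (mul_pos hδ hbpos)
                exact Real.rpow_pos_of_pos (abs_pos.2 (sub_ne_zero.2 hgLne)) _
              have hqt : Tendsto (fun u => δ * b * |g ((x u).2) - 1| ^ (1 + α)) atTop (𝓝 q) := by
                have hcont2 : Continuous fun z => δ * b * |g z - 1| ^ (1 + α) := by
                  apply continuous_const.mul
                  apply Continuous.rpow_const (continuous_abs.comp (hgcont.sub continuous_const))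
                  intro z; right; linarith
                exact (hcont2.tendsto L).comp htendL
              obtain ⟨N, hN⟩ := Metric.tendsto_atTop.1 hqt (q/2) (by linarith)
              refine ⟨max N 0, q/2, le_max_right _ _, by linarith, ?_⟩
              intro u hu
              rw [if_pos (hup0 u ((le_max_right N 0).trans hu))]
              have h1 := hN u ((le_max_left _ _).trans hu)
              rw [Real.dist_eq] at h1
              have h2 : q/2 ≤ δ * b * |g ((x u).2) - 1| ^ (1 + α) := by
                have := abs_lt.1 h1
                linarith [this.1]
              have hrnn : 0 ≤ δ * b * |g ((x u).2) - 1| ^ (1 + α) :=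
                mul_nonneg (mul_nonneg hδ.le hb) (Real.rpow_nonneg (abs_nonneg _) _)
              have h3 : δ * b * |g ((x u).2) - 1| ^ (1 + α)
                  ≤ p ((x u).2) * (δ * b * |g ((x u).2) - 1| ^ (1 + α)) := by
                nlinarith [hpgt1 ((x u).2)]
              have hfirstnn : 0 ≤ Dstar * g ((x u).2) * Real.exp ((x u).1)
                  * (Real.exp (-((x u).2)) - 1) := by
                apply mul_nonneg
                  (mul_nonneg (mul_nonneg hDstar.le (hgpos _).le) (Real.exp_pos _).le)
                have := Real.one_le_exp_iff.2 (show (0:ℝ) ≤ -((x u).2) by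
                  linarith [hup0 u ((le_max_right N 0).trans hu)])
                linarith
              linarith
          obtain ⟨T, k, hT0, hk, hgrow⟩ := hcontra
          have hgl := growth_linear (t0 := T) (fun u hu => hx2d u (hT0.trans hu))
            (fun u hu => hgrow u hu)
          set tb := T + (0 - (x T).2)/k + 1 with htbdef
          have htbT : T ≤ tb := by
            have h1 : 0 ≤ (0 - (x T).2)/k := div_nonneg (by linarith [hup0 T hT0]) hk.le
            rw [htbdef]; linarith
          have h1 := hgl tb htbT
          have h2 := hup0 tb (hT0.trans htbT)
          have h3 : k * (tb - T) = (0 - (x T).2) + k := by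
            rw [htbdef]
            field_simp
            ring
          linarith
        rw [hL0] at htendL
        exact ⟨htendL, fun t ht =>
          ⟨(min_le_left _ _).trans (hlow0 t ht), (hup0 t ht).trans (le_max_right _ _)⟩⟩
    -- Step 2: x1 tends to 0
    have hX2t0 : Tendsto (fun t => (x t).2) atTop (𝓝 0) := hband.1
    have hγt : Tendsto (fun t => g ((x t).2)) atTop (𝓝 1) := by
      have h1 := (hgcont.tendsto 0).comp hX2t0
      rwa [hg0] at h1
    have haA : min ((x 0).2) 0 ≤ max ((x 0).2) 0 :=
      (min_le_right _ _).trans (le_max_right _ _)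
    obtain ⟨z1, hz1mem, hz1min⟩ := isCompact_Icc.exists_isMinOn
      (nonempty_Icc.2 haA) hgcont.continuousOn
    have hgm : 0 < g z1 := hgpos z1
    have hγgm : ∀ t, 0 ≤ t → g z1 ≤ g ((x t).2) :=
      fun t ht => isMinOn_iff.1 hz1min _ ⟨(hband.2 t ht).1, (hband.2 t ht).2⟩
    have hX1small : ∀ ε, 0 < ε → ∃ N, ∀ t, N ≤ t → |(x t).1| ≤ ε := by
      intro ε hε
      set β := 1 - Real.exp (-ε) with hβdef
      have hβ : 0 < β := by
        have := Real.exp_lt_one_iff.2 (show -ε < 0 by linarith)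
        rw [hβdef]; linarith
      set θ := Dstar * g z1 * β / (b+1) with hθdef
      have hθ : 0 < θ := by rw [hθdef]; positivity
      have hkey : b * θ + θ ≤ Dstar * g z1 * β := by
        have h1 : (b+1) * θ = Dstar * g z1 * β := by
          rw [hθdef]; field_simp
        nlinarith
      obtain ⟨N0, hN0⟩ := Metric.tendsto_atTop.1 hγt θ hθ
      set T := max N0 0 with hTdef
      have hT0 : (0:ℝ) ≤ T := le_max_right _ _
      have hγθ : ∀ u, T ≤ u → |g ((x u).2) - 1| ≤ θ := by
        intro u hu
        have h1 := hN0 u ((le_max_left _ _).trans hu)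
        rw [Real.dist_eq] at h1
        exact h1.le
      have hup : ∀ u, T ≤ u → ε < (x u).1 →
          b * (g ((x u).2) - 1) + Dstar * g ((x u).2) * (1 - Real.exp ((x u).1)) ≤ -θ := by
        intro u hu h
        apply f1_upper hb hDstar ((abs_le.1 (hγθ u hu)).2) (hγgm u (hT0.trans hu)) hgm hβ ?_ hkey
        have h1 : Real.exp ε ≤ Real.exp ((x u).1) := Real.exp_le_exp.2 h.le
        have h2 := expsum ε
        rw [hβdef]; linarith
      have hdn : ∀ u, T ≤ u → (x u).1 < -ε →
          θ ≤ b * (g ((x u).2) - 1) + Dstar * g ((x u).2) * (1 - Real.exp ((x u).1)) := by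
        intro u hu h
        apply f1_lower hb hDstar (by linarith [(abs_le.1 (hγθ u hu)).1])
          (hγgm u (hT0.trans hu)) hgm hβ ?_ hkey
        have h1 : Real.exp ((x u).1) ≤ Real.exp (-ε) := Real.exp_le_exp.2 h.le
        rw [hβdef]; linarith
      have hA1 : ∃ t1, T ≤ t1 ∧ (x t1).1 ≤ ε := by
        by_contra hcon
        push_neg at hcon
        have hdec := decay_linear (t0 := T) (fun u hu => hx1d u (hT0.trans hu))
          (fun u hu => hup u hu (hcon u hu))
        set tb := T + ((x T).1 - ε)/θ + 1 with htbdef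
        have htbT : T ≤ tb := by
          have h1 : 0 ≤ ((x T).1 - ε)/θ := div_nonneg (by linarith [hcon T le_rfl]) hθ.le
          rw [htbdef]; linarith
        have h1 := hdec tb htbT
        have h2 := hcon tb htbT
        have h3 : θ * (tb - T) = (x T).1 - ε + θ := by
          rw [htbdef]; field_simp; ring
        linarith
      obtain ⟨t1, ht1T, ht1⟩ := hA1
      have hup' : ∀ u, t1 ≤ u → (x u).1 ≤ ε := by
        apply barrier_le (t0 := t1) (fun u hu => hx1d u (hT0.trans (ht1T.trans hu))) ?_ ht1
        intro u hu h
        have := hup u (ht1T.trans hu) h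
        linarith
      have hC : ∃ t2, t1 ≤ t2 ∧ -ε ≤ (x t2).1 := by
        by_contra hcon
        push_neg at hcon
        have hgro := growth_linear (t0 := t1) (fun u hu => hx1d u (hT0.trans (ht1T.trans hu)))
          (fun u hu => hdn u (ht1T.trans hu) (hcon u hu))
        set tb := t1 + (-ε - (x t1).1)/θ + 1 with htbdef
        have htbT : t1 ≤ tb := by
          have h1 : 0 ≤ (-ε - (x t1).1)/θ := div_nonneg (by linarith [hcon t1 le_rfl]) hθ.le
          rw [htbdef]; linarith
        have h1 := hgro tb htbT
        have h2 := hcon tb htbT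
        have h3 : θ * (tb - t1) = -ε - (x t1).1 + θ := by
          rw [htbdef]; field_simp; ring
        linarith
      obtain ⟨t2, ht2, ht2v⟩ := hC
      have hdn' : ∀ u, t2 ≤ u → -ε ≤ (x u).1 := by
        apply barrier_ge (t0 := t2)
          (fun u hu => hx1d u (hT0.trans (ht1T.trans (ht2.trans hu)))) ?_ ht2v
        intro u hu h
        have := hdn u (ht1T.trans (ht2.trans hu)) h
        linarith
      exact ⟨t2, fun u hu => abs_le.2 ⟨hdn' u hu, hup' u (ht2.trans hu)⟩⟩
    have hX1tend : Tendsto (fun t => (x t).1) atTop (𝓝 0) := by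
      rw [Metric.tendsto_atTop]
      intro ε hε
      obtain ⟨N, hN⟩ := hX1small (ε/2) (by linarith)
      refine ⟨N, fun u hu => ?_⟩
      have := hN u hu
      rw [Real.dist_eq, sub_zero]
      calc |(x u).1| ≤ ε/2 := this
        _ < ε := by linarith
    have hcomb := hX1tend.prodMk_nhds hX2t0
    have heta : (fun t => ((x t).1, (x t).2)) = x := by
      funext t
      exact Prod.mk.eta
    rw [heta] at hcomb
    have h00 : ((0:ℝ), (0:ℝ)) = (0 : ℝ × ℝ) := rfl
    rwa [h00] at hcomb
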